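/- Let v₁, …, vₙ ∈ ℝ^{n−1} be points whose coordinate matrix is lower-triangular in the sense that (vᵢ)ⱼ = 0 for j ≥ i, with (vᵢ)_{i−1} > 0 for 2 ≤ i ≤ n. Given target distances δ₁, …, δₙ > 0, a point o ∈ ℝⁿ satisfies ‖o − v̂ᵢ‖₂ = δᵢ for all i (where v̂ᵢ is vᵢ extended by a zero last coordinate) if and only if its first n−1 coordinates are uniquely determined by the system: o₁ determined from ‖o‖² = δ₁², and for 2 ≤ i ≤ n, Σ_{j=1}^{i−1}((vᵢ)ⱼ − oⱼ)² + Σ_{j=i}^{n} oⱼ² = δᵢ²; the last coordinate oₙ is determined up to sign. -/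
import Mathlib


/-- Uniqueness up to reflection of the apex point: given a base simplex with n
vertices `v 1, …, v n` in ℝ^{n−1} (coordinates 1-based, lower triangular with
positive subdiagonal), any two points of ℝⁿ realizing the same positive
distances δ₁, …, δₙ to the (zero-extended) vertices agree in their first n−1
coordinates, and their last coordinates agree up to sign. -/
theorem apex_unique_up_to_sign (n : ℕ) (hn : 1 ≤ n)
    (v : ℕ → ℕ → ℝ)
    (htri : ∀ i j, i ≤ j → v i j = 0)
    (hpos : ∀ i, 2 ≤ i → i ≤ n → 0 < v i (i - 1))
    (δ : ℕ → ℝ) (hδ : ∀ i, 1 ≤ i → i ≤ n → 0 < δ i)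
    (o o' : ℕ → ℝ)
    (ho : ∀ i, 1 ≤ i → i ≤ n →
      ∑ j ∈ Finset.Icc 1 n, (o j - v i j)^2 = (δ i)^2)
    (ho' : ∀ i, 1 ≤ i → i ≤ n →
      ∑ j ∈ Finset.Icc 1 n, (o' j - v i j)^2 = (δ i)^2) :
    (∀ j, 1 ≤ j → j ≤ n - 1 → o j = o' j) ∧ (o n = o' n ∨ o n = -o' n) := by
  have hkey : ∀ i, 1 ≤ i → i ≤ n →
      ∑ j ∈ Finset.Icc 1 n, v i j * (o' j - o j) = 0 := by
    intro i h1 h2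
    have ha := ho i h1 h2
    have hb := ho' i h1 h2
    have hc := ho 1 le_rfl hn
    have hd := ho' 1 le_rfl hn
    have e : ∑ j ∈ Finset.Icc 1 n, (2 * (v i j * (o' j - o j)))
        = ∑ j ∈ Finset.Icc 1 n, (((o j - v i j)^2 - (o' j - v i j)^2)
          - ((o j - v 1 j)^2 - (o' j - v 1 j)^2)) := by
      apply Finset.sum_congr rfl
      intro j hj
      have hv1 : v 1 j = 0 := htri 1 j (Finset.mem_Icc.mp hj).1
      rw [hv1]; ring
    have e2 : (2:ℝ) * ∑ j ∈ Finset.Icc 1 n, v i j * (o' j - o j) = 0 := by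
      rw [Finset.mul_sum, e, Finset.sum_sub_distrib, Finset.sum_sub_distrib,
        Finset.sum_sub_distrib, ha, hb, hc, hd]
      ring
    linarith
  have hfirst : ∀ j, 1 ≤ j → j ≤ n - 1 → o j = o' j := by
    intro j
    induction j using Nat.strong_induction_on with
    | _ j ih =>
      intro hj1 hj2
      have hin : j + 1 ≤ n := by omega
      have hk := hkey (j+1) (by omega) hin
      have hres : ∑ k ∈ Finset.Icc 1 j, v (j+1) k * (o' k - o k) = 0 := by
        rw [← hk]
        apply Finset.sum_subset
        · intro x hx
          simp only [Finset.mem_Icc] at hx ⊢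
          omega
        · intro x hx hx2
          simp only [Finset.mem_Icc] at hx hx2
          have : v (j+1) x = 0 := htri _ _ (by omega)
          simp [this]
      have hsingle : ∑ k ∈ Finset.Icc 1 j, v (j+1) k * (o' k - o k)
          = v (j+1) j * (o' j - o j) := by
        apply Finset.sum_eq_single_of_mem
        · simp only [Finset.mem_Icc]; omega
        · intro k hk hne
          simp only [Finset.mem_Icc] at hk
          have : o k = o' k := ih k (by omega) hk.1 (by omega)
          simp [this]
      rw [hsingle] at hres
      have hv : 0 < v (j+1) j := by
        have := hpos (j+1) (by omega) hin
        simpa using this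
      have : o' j - o j = 0 := by
        rcases mul_eq_zero.mp hres with h | h
        · exact absurd h (ne_of_gt hv)
        · exact h
      linarith
  refine ⟨hfirst, ?_⟩
  have hc := ho 1 le_rfl hn
  have hd := ho' 1 le_rfl hn
  have hzero : ∀ j ∈ Finset.Icc 1 n, v 1 j = 0 := fun j hj =>
    htri 1 j (Finset.mem_Icc.mp hj).1
  have hc' : ∑ j ∈ Finset.Icc 1 n, (o j)^2 = (δ 1)^2 := by
    rw [← hc]; exact Finset.sum_congr rfl (fun j hj => by rw [hzero j hj]; ring)
  have hd' : ∑ j ∈ Finset.Icc 1 n, (o' j)^2 = (δ 1)^2 := by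
    rw [← hd]; exact Finset.sum_congr rfl (fun j hj => by rw [hzero j hj]; ring)
  have hsplit : Finset.Icc 1 n = insert n (Finset.Icc 1 (n-1)) := by
    ext x; simp only [Finset.mem_insert, Finset.mem_Icc]; omega
  have hnmem : n ∉ Finset.Icc 1 (n-1) := by
    simp only [Finset.mem_Icc]; omega
  rw [hsplit, Finset.sum_insert hnmem] at hc' hd'
  have heq : ∑ j ∈ Finset.Icc 1 (n-1), (o j)^2
      = ∑ j ∈ Finset.Icc 1 (n-1), (o' j)^2 := by
    apply Finset.sum_congr rfl
    intro j hj
    simp only [Finset.mem_Icc] at hj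
    rw [hfirst j hj.1 hj.2]
  have hsq : (o n)^2 = (o' n)^2 := by linarith
  have : (o n - o' n) * (o n + o' n) = 0 := by nlinarith
  rcases mul_eq_zero.mp this with h | h
  · left; linarith
  · right; linarith
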